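/- Let λ > 0 and U > 0, and let φ̂ : ℝ × (0,∞) → ℝ be continuous and square-integrable on the open half-plane ℝ²₊ = ℝ × (0,∞), such that for every z > 0 the horizontal slice φ̂(·,z) is square-integrable on ℝ. Define φ(x,z) = (1/U) ∫_{-∞}^{x} e^{-(λ/U)(x-ξ)} φ̂(ξ,z) dξ. Then: (i) for every (x,z) ∈ ℝ × (0,∞), φ is partially differentiable in x and satisfies λ·φ(x,z) + U·∂ₓφ(x,z) = φ̂(x,z); (ii) φ is square-integrable on ℝ²₊ with ‖φ‖_{L²(ℝ²₊)} ≤ (1/λ)‖φ̂‖_{L²(ℝ²₊)}; and (iii) ∂ₓφ is square-integrable on ℝ²₊ with ‖∂ₓφ‖_{L²(ℝ²₊)} ≤ (2/U)‖φ̂‖_{L²(ℝ²₊)}. -/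

import Mathlib

open MeasureTheory Real Set

/-- The open upper half-plane `ℝ²₊ = ℝ × (0,∞)`, as a subset of `ℝ × ℝ`. -/
def upperHalfPlane2 : Set (ℝ × ℝ) := {p : ℝ × ℝ | 0 < p.2}

section AuxLemmas

open Filter
open scoped ENNReal NNReal

private lemma exp_integrableOn_Iic' {c : ℝ} (hc : 0 < c) (x : ℝ) :
    IntegrableOn (fun ξ : ℝ => Real.exp (c * ξ)) (Iic x) := by
  have key : ∀ y : ℝ, ∫ ξ in y..x, Real.exp (c * ξ) = c⁻¹ * (Real.exp (c * x) - Real.exp (c * y)) := by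
    intro y
    rw [intervalIntegral.integral_comp_mul_left Real.exp hc.ne', integral_exp, smul_eq_mul]
  refine integrableOn_Iic_of_intervalIntegral_norm_bounded (c⁻¹ * Real.exp (c * x)) x
    (fun y => by
      have hcont : Continuous fun ξ : ℝ => Real.exp (c * ξ) := by continuity
      exact (hcont.intervalIntegrable _ _).1)
    tendsto_id (Eventually.of_forall fun y => ?_)
  simp only [id]
  simp_rw [Real.norm_eq_abs, abs_of_pos (Real.exp_pos _)]
  rw [key y]
  have h1 : (0:ℝ) < Real.exp (c * y) := Real.exp_pos _
  have h2 : (0:ℝ) < c⁻¹ := by positivity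
  nlinarith

private lemma exp_integral_Iic' {c : ℝ} (hc : 0 < c) (x : ℝ) :
    ∫ ξ in Iic x, Real.exp (c * ξ) = Real.exp (c * x) / c := by
  have key : ∀ y : ℝ, ∫ ξ in y..x, Real.exp (c * ξ) = c⁻¹ * (Real.exp (c * x) - Real.exp (c * y)) := by
    intro y
    rw [intervalIntegral.integral_comp_mul_left Real.exp hc.ne', integral_exp, smul_eq_mul]
  refine tendsto_nhds_unique
    (intervalIntegral_tendsto_integral_Iic _ (exp_integrableOn_Iic' hc x) tendsto_id) ?_
  simp_rw [key]
  have h : Tendsto (fun y : ℝ => Real.exp (c * y)) atBot (nhds 0) :=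
    Real.tendsto_exp_atBot.comp (tendsto_id.const_mul_atBot hc)
  have := ((h.const_sub (Real.exp (c * x))).const_mul c⁻¹)
  simpa [div_eq_inv_mul] using this

private lemma kernel_integrableOn_Iic {c : ℝ} (hc : 0 < c) (x : ℝ) :
    IntegrableOn (fun ξ : ℝ => Real.exp (-c * (x - ξ))) (Iic x) := by
  have : (fun ξ : ℝ => Real.exp (-c * (x - ξ))) =
      fun ξ : ℝ => Real.exp (-c * x) * Real.exp (c * ξ) := by
    funext ξ; rw [← Real.exp_add]; ring_nf
  rw [this]
  exact (exp_integrableOn_Iic' hc x).const_mul _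

private lemma kernel_integral_Iic {c : ℝ} (hc : 0 < c) (x : ℝ) :
    ∫ ξ in Iic x, Real.exp (-c * (x - ξ)) = 1 / c := by
  have : (fun ξ : ℝ => Real.exp (-c * (x - ξ))) =
      fun ξ : ℝ => Real.exp (-c * x) * Real.exp (c * ξ) := by
    funext ξ; rw [← Real.exp_add]; ring_nf
  rw [this, MeasureTheory.integral_const_mul, exp_integral_Iic' hc x,
    show Real.exp (-c * x) * (Real.exp (c * x) / c) = Real.exp (-c * x) * Real.exp (c * x) / c by
      ring, ← Real.exp_add]
  simp

private lemma kernel_integrableOn_Ioi {c : ℝ} (hc : 0 < c) (ξ : ℝ) :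
    IntegrableOn (fun x : ℝ => Real.exp (-c * (x - ξ))) (Ioi ξ) := by
  have : (fun x : ℝ => Real.exp (-c * (x - ξ))) =
      fun x : ℝ => Real.exp (c * ξ) * Real.exp (-c * x) := by
    funext x; rw [← Real.exp_add]; ring_nf
  rw [this]
  exact (exp_neg_integrableOn_Ioi ξ hc).const_mul _

private lemma kernel_integral_Ioi {c : ℝ} (hc : 0 < c) (ξ : ℝ) :
    ∫ x in Ioi ξ, Real.exp (-c * (x - ξ)) = 1 / c := by
  have h1 : (fun x : ℝ => Real.exp (-c * (x - ξ))) =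
      fun x : ℝ => Real.exp (c * ξ) * Real.exp (-(c * x)) := by
    funext x; rw [← Real.exp_add]; ring_nf
  rw [h1, MeasureTheory.integral_const_mul]
  have h2 : ∫ x in Ioi ξ, Real.exp (-(c * x)) = c⁻¹ * Real.exp (-(c * ξ)) := by
    have := integral_comp_mul_left_Ioi (fun t => Real.exp (-t)) ξ hc
    simp only [smul_eq_mul] at this
    rw [this, integral_exp_neg_Ioi]
  rw [h2, show Real.exp (c * ξ) * (c⁻¹ * Real.exp (-(c * ξ)))
      = Real.exp (c * ξ) * Real.exp (-(c * ξ)) * c⁻¹ by ring, ← Real.exp_add]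
  simp [one_div]

private lemma kernel_lintegral_Iic {c : ℝ} (hc : 0 < c) (x : ℝ) :
    ∫⁻ ξ in Iic x, ENNReal.ofReal (Real.exp (-c * (x - ξ))) = ENNReal.ofReal (1 / c) := by
  rw [← ofReal_integral_eq_lintegral_ofReal (kernel_integrableOn_Iic hc x)
    (Eventually.of_forall fun ξ => (Real.exp_pos _).le), kernel_integral_Iic hc x]

private lemma kernel_lintegral_Ici {c : ℝ} (hc : 0 < c) (ξ : ℝ) :
    ∫⁻ x in Ici ξ, ENNReal.ofReal (Real.exp (-c * (x - ξ))) = ENNReal.ofReal (1 / c) := by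
  rw [← MeasureTheory.restrict_Ioi_eq_restrict_Ici,
    ← ofReal_integral_eq_lintegral_ofReal (kernel_integrableOn_Ioi hc ξ)
    (Eventually.of_forall fun x => (Real.exp_pos _).le), kernel_integral_Ioi hc ξ]

private lemma slice_integrableOn {a : ℝ} (ha : 0 < a) {f : ℝ → ℝ}
    (hf : MemLp f 2 volume) (x : ℝ) :
    IntegrableOn (fun ξ : ℝ => Real.exp (a * ξ) * f ξ) (Iic x) := by
  have hc : Continuous fun ξ : ℝ => Real.exp (a * ξ) := by continuity
  have h1 : MemLp (fun ξ : ℝ => Real.exp (a * ξ)) 2 (volume.restrict (Iic x)) := by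
    refine (memLp_two_iff_integrable_sq hc.aestronglyMeasurable).2 ?_
    have he : (fun ξ : ℝ => Real.exp (a * ξ) ^ 2) = fun ξ : ℝ => Real.exp (2 * a * ξ) := by
      funext ξ; rw [sq, ← Real.exp_add]; congr 1; ring
    rw [he]
    exact exp_integrableOn_Iic' (by positivity) x
  have h2 : MemLp f 2 (volume.restrict (Iic x)) := hf.restrict _
  have h3 : MemLp ((fun ξ : ℝ => Real.exp (a * ξ)) • f) 1 (volume.restrict (Iic x)) :=
    h2.smul h1
  exact memLp_one_iff_integrable.mp h3

private lemma slice_hasDerivAt {a U : ℝ} (ha : 0 < a) (hU : 0 < U) {f : ℝ → ℝ}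
    (hc : Continuous f) (hf : MemLp f 2 volume) (F : ℝ → ℝ)
    (hF : ∀ y, F y = (1 / U) * ∫ ξ in Iic y, Real.exp (-a * (y - ξ)) * f ξ) (x : ℝ) :
    HasDerivAt F (-a * F x + (1 / U) * f x) x := by
  set h : ℝ → ℝ := fun ξ => Real.exp (a * ξ) * f ξ with hh
  have hhc : Continuous h := by continuity
  have hInt : ∀ y : ℝ, IntegrableOn h (Iic y) := fun y => slice_integrableOn ha hf y
  set C : ℝ := ∫ ξ in Iic x, h ξ with hC
  have hrep : ∀ y : ℝ, F y = (1 / U) * (Real.exp (-(a * y)) * (C + ∫ ξ in x..y, h ξ)) := by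
    intro y
    have h1 : (C + ∫ ξ in x..y, h ξ) = ∫ ξ in Iic y, h ξ := by
      have := intervalIntegral.integral_Iic_sub_Iic (hInt x) (hInt y)
      linarith
    rw [hF y, h1]
    congr 1
    rw [← MeasureTheory.integral_const_mul]
    apply setIntegral_congr_ae measurableSet_Iic
    filter_upwards with ξ _
    rw [hh]
    show Real.exp (-a * (y - ξ)) * f ξ = Real.exp (-(a * y)) * (Real.exp (a * ξ) * f ξ)
    rw [← mul_assoc, ← Real.exp_add]
    congr 2
    ring
  have hIi : HasDerivAt (fun y => ∫ ξ in x..y, h ξ) (h x) x := by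
    refine intervalIntegral.integral_hasDerivAt_right ?_
      hhc.stronglyMeasurable.aestronglyMeasurable.stronglyMeasurableAtFilter hhc.continuousAt
    exact ((hInt x).mono_set (by simp [Set.uIcc_self])).intervalIntegrable
  have hIi' : HasDerivAt (fun y => C + ∫ ξ in x..y, h ξ) (h x) x := hIi.const_add C
  have hE : HasDerivAt (fun y : ℝ => Real.exp (-(a * y))) (Real.exp (-(a * x)) * -a) x := by
    have h0 : HasDerivAt (fun y : ℝ => -(a * y)) (-a) x := by
      simpa using (hasDerivAt_id x).const_mul (-a)
    exact h0.exp
  have hprod := (hE.mul hIi').const_mul (1 / U)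
  have hkey : HasDerivAt F
      ((1 / U) * (Real.exp (-(a * x)) * -a * (C + ∫ ξ in x..x, h ξ)
        + Real.exp (-(a * x)) * h x)) x := by
    refine hprod.congr_of_eventuallyEq ?_
    filter_upwards with y
    rw [hrep y]
    rfl
  convert hkey using 1
  rw [intervalIntegral.integral_same, add_zero, hh]
  show -a * F x + 1 / U * f x
    = 1 / U * (Real.exp (-(a * x)) * -a * C + Real.exp (-(a * x)) * (Real.exp (a * x) * f x))
  rw [hrep x, intervalIntegral.integral_same, add_zero, ← mul_assoc (Real.exp (-(a * x))),
    ← Real.exp_add]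
  simp only [neg_add_cancel, Real.exp_zero, one_mul]
  ring

private lemma sliceA {a U : ℝ} (ha : 0 < a) (hU : 0 < U) (f : ℝ → ℝ) (hm : Measurable f) (x : ℝ) :
    ((‖(1 / U) * (∫ ξ in Iic x, Real.exp (-a * (x - ξ)) * f ξ)‖₊ : ℝ≥0∞)) ^ (2:ℝ)
      ≤ ENNReal.ofReal (1 / (U ^ 2 * a)) *
        ∫⁻ ξ in Iic x, ENNReal.ofReal (Real.exp (-a * (x - ξ))) * (‖f ξ‖₊ : ℝ≥0∞) ^ (2:ℝ) := by
  set μ' := volume.restrict (Iic x)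
  set K : ℝ → ℝ≥0∞ := fun ξ => ENNReal.ofReal (Real.exp (-a * (x - ξ))) with hK
  set nf : ℝ → ℝ≥0∞ := fun ξ => (‖f ξ‖₊ : ℝ≥0∞) ^ (2:ℝ) with hnf
  set I : ℝ≥0∞ := ∫⁻ ξ in Iic x, K ξ * nf ξ with hI
  set F : ℝ → ℝ≥0∞ := fun ξ => ENNReal.ofReal (Real.exp (-a * (x - ξ) / 2)) with hF
  have hFmeas : Measurable F :=
    ENNReal.measurable_ofReal.comp (by fun_prop)
  have hGmeas : Measurable fun ξ => F ξ * (‖f ξ‖₊ : ℝ≥0∞) := hFmeas.mul hm.enorm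
  have hF2 : ∀ ξ, F ξ ^ (2:ℝ) = K ξ := by
    intro ξ
    rw [hF, ENNReal.ofReal_rpow_of_pos (Real.exp_pos _), ← Real.exp_mul, hK]
    show ENNReal.ofReal (Real.exp (-a * (x - ξ) / 2 * 2)) = ENNReal.ofReal (Real.exp (-a * (x - ξ)))
    congr 1
    ring
  have step1 : ((‖(1 / U) * (∫ ξ in Iic x, Real.exp (-a * (x - ξ)) * f ξ)‖₊ : ℝ≥0∞))
      ≤ ENNReal.ofReal (1 / U) * ∫⁻ ξ in Iic x, K ξ * (‖f ξ‖₊ : ℝ≥0∞) := by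
    rw [nnnorm_mul, ENNReal.coe_mul, ← enorm_eq_nnnorm, Real.enorm_eq_ofReal (by positivity)]
    refine mul_le_mul_right ?_ _
    refine (enorm_integral_le_lintegral_enorm _).trans (le_of_eq ?_)
    refine lintegral_congr fun ξ => ?_
    rw [enorm_mul, Real.enorm_eq_ofReal (Real.exp_pos _).le]
    rfl
  have step2 : ∫⁻ ξ in Iic x, K ξ * (‖f ξ‖₊ : ℝ≥0∞)
      ≤ (ENNReal.ofReal (1 / a)) ^ (1/2 : ℝ) * I ^ (1/2 : ℝ) := by
    have hconj : Real.HolderConjugate 2 2 := ⟨by norm_num, by norm_num, by norm_num⟩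
    have hHold := ENNReal.lintegral_mul_le_Lp_mul_Lq μ'
      hconj hFmeas.aemeasurable hGmeas.aemeasurable
    have hsplit : ∀ ξ, K ξ * (‖f ξ‖₊ : ℝ≥0∞)
        = (F * fun ξ => F ξ * (‖f ξ‖₊ : ℝ≥0∞)) ξ := by
      intro ξ
      show K ξ * (‖f ξ‖₊ : ℝ≥0∞) = F ξ * (F ξ * (‖f ξ‖₊ : ℝ≥0∞))
      rw [← mul_assoc, hF, ← ENNReal.ofReal_mul (Real.exp_pos _).le, ← Real.exp_add,
        show -a * (x - ξ) / 2 + -a * (x - ξ) / 2 = -a * (x - ξ) by ring, hK]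
    calc ∫⁻ ξ in Iic x, K ξ * (‖f ξ‖₊ : ℝ≥0∞)
        = ∫⁻ ξ in Iic x, (F * fun ξ => F ξ * (‖f ξ‖₊ : ℝ≥0∞)) ξ :=
          lintegral_congr fun ξ => hsplit ξ
      _ ≤ (∫⁻ ξ in Iic x, F ξ ^ (2:ℝ)) ^ (1/2 : ℝ)
          * (∫⁻ ξ in Iic x, (F ξ * (‖f ξ‖₊ : ℝ≥0∞)) ^ (2:ℝ)) ^ (1/2 : ℝ) := hHold
      _ = (ENNReal.ofReal (1 / a)) ^ (1/2 : ℝ) * I ^ (1/2 : ℝ) := by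
          congr 1
          · congr 1
            rw [← kernel_lintegral_Iic ha x]
            exact lintegral_congr fun ξ => hF2 ξ
          · congr 1
            rw [hI]
            refine lintegral_congr fun ξ => ?_
            rw [ENNReal.mul_rpow_of_nonneg _ _ (by norm_num : (0:ℝ) ≤ 2), hF2 ξ, hnf]
  calc ((‖(1 / U) * (∫ ξ in Iic x, Real.exp (-a * (x - ξ)) * f ξ)‖₊ : ℝ≥0∞)) ^ (2:ℝ)
      ≤ (ENNReal.ofReal (1 / U) * ((ENNReal.ofReal (1 / a)) ^ (1/2 : ℝ) * I ^ (1/2 : ℝ))) ^ (2:ℝ) :=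
        ENNReal.rpow_le_rpow (step1.trans (mul_le_mul_right step2 _)) (by norm_num)
    _ = ENNReal.ofReal (1 / (U ^ 2 * a)) * I := by
        rw [ENNReal.mul_rpow_of_nonneg _ _ (by norm_num : (0:ℝ) ≤ 2),
          ENNReal.mul_rpow_of_nonneg _ _ (by norm_num : (0:ℝ) ≤ 2),
          ← ENNReal.rpow_mul, ← ENNReal.rpow_mul]
        norm_num
        rw [← ENNReal.ofReal_pow (by positivity), ← mul_assoc,
          ← ENNReal.ofReal_mul (by positivity)]
        congr 2
        ring

private lemma sliceB {a : ℝ} (ha : 0 < a) (f : ℝ → ℝ) (hm : Measurable f) :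
    ∫⁻ x, (∫⁻ ξ in Iic x, ENNReal.ofReal (Real.exp (-a * (x - ξ))) * (‖f ξ‖₊ : ℝ≥0∞) ^ (2:ℝ))
      = ENNReal.ofReal (1 / a) * ∫⁻ ξ, (‖f ξ‖₊ : ℝ≥0∞) ^ (2:ℝ) := by
  classical
  set nf : ℝ → ℝ≥0∞ := fun ξ => (‖f ξ‖₊ : ℝ≥0∞) ^ (2:ℝ) with hnf
  have hnf_meas : Measurable nf :=
    ENNReal.continuous_rpow_const.measurable.comp hm.enorm
  have hnf_fin : ∀ ξ, nf ξ ≠ ∞ := fun ξ =>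
    (ENNReal.rpow_lt_top_of_nonneg (by norm_num) ENNReal.coe_ne_top).ne
  set w : ℝ → ℝ → ℝ≥0∞ := fun x ξ =>
    if ξ ≤ x then ENNReal.ofReal (Real.exp (-a * (x - ξ))) * nf ξ else 0 with hw
  have hw_meas : Measurable (Function.uncurry w) := by
    apply Measurable.ite
    · exact measurableSet_le measurable_snd measurable_fst
    · exact (ENNReal.measurable_ofReal.comp
        (by fun_prop : Measurable fun p : ℝ × ℝ => Real.exp (-a * (p.1 - p.2)))).mul
        (hnf_meas.comp measurable_snd)
    · exact measurable_const
  have h1 : ∀ x : ℝ, (∫⁻ ξ in Iic x, ENNReal.ofReal (Real.exp (-a * (x - ξ))) * nf ξ)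
      = ∫⁻ ξ, w x ξ := by
    intro x
    rw [← lintegral_indicator measurableSet_Iic]
    exact lintegral_congr fun ξ => by simp [Set.indicator_apply, hw, mem_Iic]
  refine (lintegral_congr fun x => h1 x).trans ?_
  rw [lintegral_lintegral_swap hw_meas.aemeasurable]
  have h2 : ∀ ξ : ℝ, (∫⁻ x, w x ξ) = ENNReal.ofReal (1 / a) * nf ξ := by
    intro ξ
    have heq : ∀ x : ℝ, w x ξ
        = (Ici ξ).indicator (fun x => ENNReal.ofReal (Real.exp (-a * (x - ξ))) * nf ξ) x := by
      intro x
      simp only [Set.indicator_apply, hw, mem_Ici]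
    simp_rw [heq]
    rw [lintegral_indicator measurableSet_Ici,
      lintegral_mul_const' _ _ (hnf_fin ξ), kernel_lintegral_Ici ha ξ]
  simp_rw [h2]
  rw [lintegral_const_mul' _ _ ENNReal.ofReal_ne_top]

private lemma phi_meas (a U : ℝ) (g : ℝ × ℝ → ℝ) (hg : Measurable g) :
    StronglyMeasurable fun p : ℝ × ℝ =>
      (1 / U) * ∫ ξ in Iic p.1, Real.exp (-a * (p.1 - ξ)) * g (ξ, p.2) := by
  classical
  set k : (ℝ × ℝ) × ℝ → ℝ := fun q =>
    if q.2 ≤ q.1.1 then Real.exp (-a * (q.1.1 - q.2)) * g (q.2, q.1.2) else 0 with hkdef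
  have hk : StronglyMeasurable k := by
    refine Measurable.stronglyMeasurable (Measurable.ite ?_ ?_ measurable_const)
    · exact measurableSet_le measurable_snd (measurable_fst.comp measurable_fst)
    · exact (by fun_prop : Measurable fun q : (ℝ × ℝ) × ℝ =>
        Real.exp (-a * (q.1.1 - q.2))).mul
        (hg.comp (measurable_snd.prodMk (measurable_fst.snd)))
  have h2 := hk.integral_prod_right' (ν := volume)
  have h3 : (fun p : ℝ × ℝ => ∫ ξ in Iic p.1, Real.exp (-a * (p.1 - ξ)) * g (ξ, p.2))
      = fun p => ∫ ξ, k (p, ξ) := by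
    funext p
    rw [← MeasureTheory.integral_indicator measurableSet_Iic]
    refine integral_congr_ae (Filter.Eventually.of_forall fun ξ => ?_)
    simp [Set.indicator_apply, mem_Iic, hkdef]
  have h4 : StronglyMeasurable fun p : ℝ × ℝ =>
      ∫ ξ in Iic p.1, Real.exp (-a * (p.1 - ξ)) * g (ξ, p.2) := by
    rw [h3]; exact h2
  exact stronglyMeasurable_const.mul h4

end AuxLemmas

open scoped ENNReal NNReal

/-- Let `λ > 0` and `U > 0`, and let `φ̂ : ℝ × (0,∞) → ℝ` be continuous
and square-integrable on the half-plane `ℝ²₊ = ℝ × (0,∞)`, with all horizontal slices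
`φ̂(·,z)`, `z > 0`, square-integrable on `ℝ`.  Define
`φ(x,z) = (1/U) ∫_{-∞}^{x} e^{-(λ/U)(x-ξ)} φ̂(ξ,z) dξ`.  Then:
(i) `φ` is partially differentiable in `x` and `λ·φ + U·∂ₓφ = φ̂` on `ℝ × (0,∞)`;
(ii) `φ` is square-integrable on `ℝ²₊` with `‖φ‖ ≤ (1/λ)‖φ̂‖`;
(iii) `∂ₓφ` is square-integrable on `ℝ²₊` with `‖∂ₓφ‖ ≤ (2/U)‖φ̂‖`. -/
theorem statement4
    (l U : ℝ) (hl : 0 < l) (hU : 0 < U)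
    (φhat : ℝ → ℝ → ℝ)
    (hcont : ContinuousOn (fun p : ℝ × ℝ => φhat p.1 p.2) upperHalfPlane2)
    (hsq : MemLp (fun p : ℝ × ℝ => φhat p.1 p.2) 2 (volume.restrict upperHalfPlane2))
    (hslice : ∀ z : ℝ, 0 < z → MemLp (fun x => φhat x z) 2 volume)
    (φ : ℝ → ℝ → ℝ)
    (hφ : ∀ x z : ℝ, φ x z
        = (1 / U) * ∫ ξ in Iic x, Real.exp (-(l / U) * (x - ξ)) * φhat ξ z) :
    (∀ x z : ℝ, 0 < z →
      DifferentiableAt ℝ (fun y => φ y z) x ∧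
      l * φ x z + U * deriv (fun y => φ y z) x = φhat x z) ∧
    (MemLp (fun p : ℝ × ℝ => φ p.1 p.2) 2 (volume.restrict upperHalfPlane2) ∧
      eLpNorm (fun p : ℝ × ℝ => φ p.1 p.2) 2 (volume.restrict upperHalfPlane2)
        ≤ ENNReal.ofReal (1 / l)
          * eLpNorm (fun p : ℝ × ℝ => φhat p.1 p.2) 2 (volume.restrict upperHalfPlane2)) ∧
    (MemLp (fun p : ℝ × ℝ => deriv (fun y => φ y p.2) p.1) 2
        (volume.restrict upperHalfPlane2) ∧
      eLpNorm (fun p : ℝ × ℝ => deriv (fun y => φ y p.2) p.1) 2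
          (volume.restrict upperHalfPlane2)
        ≤ ENNReal.ofReal (2 / U)
          * eLpNorm (fun p : ℝ × ℝ => φhat p.1 p.2) 2 (volume.restrict upperHalfPlane2)) := by
  classical
  set a : ℝ := l / U with ha_def
  have ha : 0 < a := div_pos hl hU
  have hopen : IsOpen upperHalfPlane2 := isOpen_lt continuous_const continuous_snd
  have hSmeas : MeasurableSet upperHalfPlane2 := hopen.measurableSet
  set ν := volume.restrict upperHalfPlane2 with hν_def
  -- slice continuity
  have hslicecont : ∀ z : ℝ, 0 < z → Continuous fun ξ => φhat ξ z := by
    intro z hz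
    rw [continuous_iff_continuousAt]
    intro ξ
    have h1 : ContinuousAt (fun p : ℝ × ℝ => φhat p.1 p.2) (ξ, z) :=
      hcont.continuousAt (hopen.mem_nhds hz)
    have h2 : Continuous fun y : ℝ => ((y, z) : ℝ × ℝ) := continuous_id.prodMk continuous_const
    have h3 : Continuous ((fun p : ℝ × ℝ => φhat p.1 p.2) ∘ fun y : ℝ => ((y, z) : ℝ × ℝ)) :=
      hcont.comp_continuous h2 fun y => hz
    exact h3.continuousAt
  -- the pointwise derivative
  have key : ∀ z : ℝ, 0 < z → ∀ x : ℝ,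
      HasDerivAt (fun y => φ y z) (-a * φ x z + (1 / U) * φhat x z) x := by
    intro z hz x
    refine slice_hasDerivAt ha hU (hslicecont z hz) (hslice z hz) _ (fun y => ?_) x
    exact hφ y z
  have part1 : ∀ x z : ℝ, 0 < z →
      DifferentiableAt ℝ (fun y => φ y z) x ∧
      l * φ x z + U * deriv (fun y => φ y z) x = φhat x z := by
    intro x z hz
    have hk := key z hz x
    refine ⟨hk.differentiableAt, ?_⟩
    rw [hk.deriv, ha_def]
    field_simp
    ring
  -- the measurable globalization
  set g : ℝ × ℝ → ℝ := upperHalfPlane2.piecewise (fun p => φhat p.1 p.2) (fun _ => 0)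
    with hg_def
  have hg_meas : Measurable g :=
    ContinuousOn.measurable_piecewise hcont continuousOn_const hSmeas
  have hg_eq : ∀ ξ z : ℝ, 0 < z → g (ξ, z) = φhat ξ z := fun ξ z hz =>
    Set.piecewise_eq_of_mem _ _ _ (show (ξ, z) ∈ upperHalfPlane2 from hz)
  have hg_ae : (fun p : ℝ × ℝ => φhat p.1 p.2) =ᵐ[ν] g := by
    filter_upwards [ae_restrict_mem hSmeas] with p hp
    exact (Set.piecewise_eq_of_mem upperHalfPlane2 (fun p : ℝ × ℝ => φhat p.1 p.2)
      (fun _ => (0:ℝ)) hp).symm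
  set Φ : ℝ × ℝ → ℝ :=
    fun p => (1 / U) * ∫ ξ in Iic p.1, Real.exp (-a * (p.1 - ξ)) * g (ξ, p.2) with hΦ_def
  have hΦ_meas : StronglyMeasurable Φ := phi_meas a U g hg_meas
  have hΦφ : ∀ p ∈ upperHalfPlane2, φ p.1 p.2 = Φ p := by
    intro p hp
    rw [hφ p.1 p.2, hΦ_def]
    congr 1
    refine setIntegral_congr_ae measurableSet_Iic ?_
    filter_upwards with ξ _
    rw [hg_eq ξ p.2 hp]
  have hφ_ae : (fun p : ℝ × ℝ => φ p.1 p.2) =ᵐ[ν] Φ := by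
    filter_upwards [ae_restrict_mem hSmeas] with p hp using hΦφ p hp
  have hφ_aesm : AEStronglyMeasurable (fun p : ℝ × ℝ => φ p.1 p.2) ν :=
    (hΦ_meas.aestronglyMeasurable).congr hφ_ae.symm
  -- product structure of the measure
  have hSprod : upperHalfPlane2 = (univ : Set ℝ) ×ˢ Ioi (0:ℝ) := by
    ext p; simp [upperHalfPlane2, Set.mem_prod]
  have hν_prod : ν = (volume : Measure ℝ).prod (volume.restrict (Ioi (0:ℝ))) := by
    rw [hν_def, Measure.volume_eq_prod, hSprod, ← Measure.prod_restrict,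
      Measure.restrict_univ]
  have hΦ2_meas : Measurable fun p : ℝ × ℝ => (‖Φ p‖₊ : ℝ≥0∞) ^ (2:ℝ) :=
    ENNReal.continuous_rpow_const.measurable.comp hΦ_meas.measurable.enorm
  have hg2_meas : Measurable fun p : ℝ × ℝ => (‖g p‖₊ : ℝ≥0∞) ^ (2:ℝ) :=
    ENNReal.continuous_rpow_const.measurable.comp hg_meas.enorm
  -- the main lintegral estimate
  have hlint : ∫⁻ p, (‖Φ p‖₊ : ℝ≥0∞) ^ (2:ℝ) ∂ν
      ≤ ENNReal.ofReal (1 / l ^ 2) * ∫⁻ p, (‖g p‖₊ : ℝ≥0∞) ^ (2:ℝ) ∂ν := by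
    rw [hν_prod, lintegral_prod_symm _ hΦ2_meas.aemeasurable,
      lintegral_prod_symm _ hg2_meas.aemeasurable]
    have hinner : ∀ z : ℝ, 0 < z → (∫⁻ x, (‖Φ (x, z)‖₊ : ℝ≥0∞) ^ (2:ℝ))
        ≤ ENNReal.ofReal (1 / l ^ 2) * ∫⁻ ξ, (‖g (ξ, z)‖₊ : ℝ≥0∞) ^ (2:ℝ) := by
      intro z hz
      have hgz : Measurable fun ξ => g (ξ, z) :=
        hg_meas.comp (measurable_id.prodMk measurable_const)
      calc ∫⁻ x, (‖Φ (x, z)‖₊ : ℝ≥0∞) ^ (2:ℝ)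
          ≤ ∫⁻ x, ENNReal.ofReal (1 / (U ^ 2 * a)) *
              ∫⁻ ξ in Iic x,
                ENNReal.ofReal (Real.exp (-a * (x - ξ))) * (‖g (ξ, z)‖₊ : ℝ≥0∞) ^ (2:ℝ) :=
            lintegral_mono fun x => sliceA ha hU _ hgz x
        _ = ENNReal.ofReal (1 / (U ^ 2 * a)) * ∫⁻ x, ∫⁻ ξ in Iic x,
              ENNReal.ofReal (Real.exp (-a * (x - ξ))) * (‖g (ξ, z)‖₊ : ℝ≥0∞) ^ (2:ℝ) :=
            lintegral_const_mul' _ _ ENNReal.ofReal_ne_top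
        _ = ENNReal.ofReal (1 / (U ^ 2 * a)) *
              (ENNReal.ofReal (1 / a) * ∫⁻ ξ, (‖g (ξ, z)‖₊ : ℝ≥0∞) ^ (2:ℝ)) := by
            rw [sliceB ha _ hgz]
        _ = ENNReal.ofReal (1 / l ^ 2) * ∫⁻ ξ, (‖g (ξ, z)‖₊ : ℝ≥0∞) ^ (2:ℝ) := by
            rw [← mul_assoc, ← ENNReal.ofReal_mul (by positivity)]
            congr 2
            rw [ha_def]
            field_simp
    calc ∫⁻ z in Ioi (0:ℝ), ∫⁻ x, (‖Φ (x, z)‖₊ : ℝ≥0∞) ^ (2:ℝ)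
        ≤ ∫⁻ z in Ioi (0:ℝ),
            ENNReal.ofReal (1 / l ^ 2) * ∫⁻ ξ, (‖g (ξ, z)‖₊ : ℝ≥0∞) ^ (2:ℝ) := by
          refine lintegral_mono_ae ?_
          filter_upwards [ae_restrict_mem measurableSet_Ioi] with z hz
          exact hinner z hz
      _ = ENNReal.ofReal (1 / l ^ 2)
            * ∫⁻ z in Ioi (0:ℝ), ∫⁻ ξ, (‖g (ξ, z)‖₊ : ℝ≥0∞) ^ (2:ℝ) :=
          lintegral_const_mul' _ _ ENNReal.ofReal_ne_top
  -- eLpNorm versions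
  have heq_g : eLpNorm (fun p : ℝ × ℝ => φhat p.1 p.2) 2 ν = eLpNorm g 2 ν :=
    eLpNorm_congr_ae hg_ae
  have heq_φ : eLpNorm (fun p : ℝ × ℝ => φ p.1 p.2) 2 ν = eLpNorm Φ 2 ν :=
    eLpNorm_congr_ae hφ_ae
  have hofReal_sq : ENNReal.ofReal (1 / l ^ 2) ^ (1/2 : ℝ) = ENNReal.ofReal (1 / l) := by
    rw [ENNReal.ofReal_rpow_of_pos (by positivity)]
    congr 1
    have e1 : ((1:ℝ) / l ^ 2) = ((1:ℝ) / l) ^ (2:ℝ) := by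
      have e0 : ((1:ℝ) / l) ^ (2:ℝ) = ((1:ℝ) / l) ^ (2:ℕ) := by
        rw [← Real.rpow_natCast ((1:ℝ)/l) 2]; norm_num
      rw [e0, div_pow, one_pow]
    rw [e1, ← Real.rpow_mul (by positivity)]
    norm_num
  have hnorm2 : eLpNorm Φ 2 ν ≤ ENNReal.ofReal (1 / l) * eLpNorm g 2 ν := by
    rw [eLpNorm_eq_lintegral_rpow_enorm_toReal (by norm_num) (by norm_num),
      eLpNorm_eq_lintegral_rpow_enorm_toReal (by norm_num) (by norm_num)]
    simp only [ENNReal.toReal_ofNat]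
    calc (∫⁻ p, (‖Φ p‖₊ : ℝ≥0∞) ^ (2:ℝ) ∂ν) ^ (1/2 : ℝ)
        ≤ (ENNReal.ofReal (1 / l ^ 2) * ∫⁻ p, (‖g p‖₊ : ℝ≥0∞) ^ (2:ℝ) ∂ν) ^ (1/2 : ℝ) :=
          ENNReal.rpow_le_rpow hlint (by norm_num)
      _ = ENNReal.ofReal (1 / l) * (∫⁻ p, (‖g p‖₊ : ℝ≥0∞) ^ (2:ℝ) ∂ν) ^ (1/2 : ℝ) := by
          rw [ENNReal.mul_rpow_of_nonneg _ _ (by norm_num), hofReal_sq]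
  have hφ_bound : eLpNorm (fun p : ℝ × ℝ => φ p.1 p.2) 2 ν
      ≤ ENNReal.ofReal (1 / l) * eLpNorm (fun p : ℝ × ℝ => φhat p.1 p.2) 2 ν := by
    rw [heq_φ, heq_g]; exact hnorm2
  have hmemφ : MemLp (fun p : ℝ × ℝ => φ p.1 p.2) 2 ν := by
    refine ⟨hφ_aesm, lt_of_le_of_lt hφ_bound ?_⟩
    exact ENNReal.mul_lt_top ENNReal.ofReal_lt_top hsq.2
  -- part (iii)
  set D : ℝ × ℝ → ℝ := fun p => (1 / U) * (φhat p.1 p.2 - l * φ p.1 p.2) with hD_def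
  have hD_ae : (fun p : ℝ × ℝ => deriv (fun y => φ y p.2) p.1) =ᵐ[ν] D := by
    filter_upwards [ae_restrict_mem hSmeas] with p hp
    rw [(key p.2 hp p.1).deriv, hD_def, ha_def]
    field_simp
    ring
  have h1 : MemLp (fun p : ℝ × ℝ => φhat p.1 p.2 - l * φ p.1 p.2) 2 ν :=
    hsq.sub (hmemφ.const_mul l)
  have hmemD : MemLp D 2 ν := h1.const_mul (1 / U)
  have hmem3 : MemLp (fun p : ℝ × ℝ => deriv (fun y => φ y p.2) p.1) 2 ν :=
    hmemD.ae_eq hD_ae.symm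
  have hDnorm : eLpNorm D 2 ν
      ≤ ENNReal.ofReal (2 / U) * eLpNorm (fun p : ℝ × ℝ => φhat p.1 p.2) 2 ν := by
    set N := eLpNorm (fun p : ℝ × ℝ => φhat p.1 p.2) 2 ν with hN
    have e1 : eLpNorm D 2 ν = ENNReal.ofReal (1 / U)
        * eLpNorm (fun p : ℝ × ℝ => φhat p.1 p.2 - l * φ p.1 p.2) 2 ν := by
      rw [← Real.enorm_eq_ofReal (by positivity : (0:ℝ) ≤ 1 / U),
        ← eLpNorm_const_smul ((1:ℝ)/U)
          (fun p : ℝ × ℝ => φhat p.1 p.2 - l * φ p.1 p.2) 2 ν]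
      rfl
    have e2 : eLpNorm (fun p : ℝ × ℝ => l * φ p.1 p.2) 2 ν
        = ENNReal.ofReal l * eLpNorm (fun p : ℝ × ℝ => φ p.1 p.2) 2 ν := by
      rw [← Real.enorm_eq_ofReal hl.le,
        ← eLpNorm_const_smul l (fun p : ℝ × ℝ => φ p.1 p.2) 2 ν]
      rfl
    have e3 : eLpNorm (fun p : ℝ × ℝ => φhat p.1 p.2 - l * φ p.1 p.2) 2 ν
        ≤ N + eLpNorm (fun p : ℝ × ℝ => l * φ p.1 p.2) 2 ν := by
      have := eLpNorm_sub_le hsq.1 (hmemφ.const_mul l).1 (by norm_num : (1:ℝ≥0∞) ≤ 2)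
      exact this
    have e4 : eLpNorm (fun p : ℝ × ℝ => l * φ p.1 p.2) 2 ν ≤ N := by
      rw [e2]
      calc ENNReal.ofReal l * eLpNorm (fun p : ℝ × ℝ => φ p.1 p.2) 2 ν
          ≤ ENNReal.ofReal l * (ENNReal.ofReal (1 / l) * N) :=
            mul_le_mul_right hφ_bound _
        _ = (ENNReal.ofReal l * ENNReal.ofReal (1 / l)) * N := by rw [mul_assoc]
        _ = N := by
            rw [← ENNReal.ofReal_mul hl.le, mul_one_div, div_self hl.ne', ENNReal.ofReal_one,
              one_mul]
    calc eLpNorm D 2 ν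
        = ENNReal.ofReal (1 / U)
            * eLpNorm (fun p : ℝ × ℝ => φhat p.1 p.2 - l * φ p.1 p.2) 2 ν := e1
      _ ≤ ENNReal.ofReal (1 / U) * (N + N) :=
          mul_le_mul_right (e3.trans (add_le_add_right e4 N)) _
      _ = ENNReal.ofReal (2 / U) * N := by
          rw [← two_mul, ← mul_assoc]
          congr 1
          rw [show (2:ℝ≥0∞) = ENNReal.ofReal 2 by simp, ← ENNReal.ofReal_mul (by positivity)]
          congr 1
          ring
  have hderiv_norm : eLpNorm (fun p : ℝ × ℝ => deriv (fun y => φ y p.2) p.1) 2 ν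
      ≤ ENNReal.ofReal (2 / U) * eLpNorm (fun p : ℝ × ℝ => φhat p.1 p.2) 2 ν := by
    rw [eLpNorm_congr_ae hD_ae]
    exact hDnorm
  exact ⟨part1, ⟨hmemφ, hφ_bound⟩, ⟨hmem3, hderiv_norm⟩⟩
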